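/- Let a and n be integers with a ≥ 7, a ≡ 3 (mod 4), n ≥ 3, n ≡ 3 (mod 4), and a(n−2) ≥ 2n+1. Then the Frobenius number of the triple {S_{a,n}, S_{a,n+1}, S_{a,n+2}} equals (4n−1)·S_{a,n+1} + ((a(n−2)−2n−1)/4)·S_{a,n+2} − S_{a,n}. -/

import Mathlib

/-- The 2-step star number `S_{a,n} = a·n·(n−2) + 1`. -/
def twoStepStar (a n : ℕ) : ℕ := a * n * (n - 2) + 1

theorem frobenius_twoStepStar_three_three (a n : ℕ) (ha : 7 ≤ a) (ha4 : a % 4 = 3) (hn : 3 ≤ n) (hn4 : n % 4 = 3) (hbig : 2 * n + 1 ≤ a * (n - 2)) :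
    ∃ g : ℕ,
      FrobeniusNumber g
        {twoStepStar a n, twoStepStar a (n + 1), twoStepStar a (n + 2)} ∧
      (g : ℚ) = (4 * (n : ℚ) - 1) * twoStepStar a (n + 1) + (((a : ℚ) * ((n : ℚ) - 2) - 2 * (n : ℚ) - 1) / 4) * twoStepStar a (n + 2) - twoStepStar a n := by
  obtain ⟨s, rfl⟩ : ∃ s, a = 4*s+3 := ⟨(a-3)/4, by omega⟩
  obtain ⟨t, rfl⟩ : ∃ t, n = 4*t+3 := ⟨(n-3)/4, by omega⟩
  have hs1 : 1 ≤ s := by omega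
  clear ha ha4 hn hn4 hbig
  -- Abbreviations
  set A : ℕ := (4*s+3)*(4*t+3)*(4*t+1)+1 with hA
  set B : ℕ := (4*s+3)*(4*t+4)*(4*t+2)+1 with hB
  set C : ℕ := (4*s+3)*(4*t+5)*(4*t+3)+1 with hC
  have hAts : twoStepStar (4*s+3) (4*t+3) = A := by
    unfold twoStepStar; rw [show (4*t+3) - 2 = 4*t+1 from by omega, hA]
  have hBts : twoStepStar (4*s+3) (4*t+3+1) = B := by
    unfold twoStepStar
    rw [show (4*t+3+1) - 2 = 4*t+2 from by omega, show 4*t+3+1 = 4*t+4 from by omega, hB]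
  have hCts : twoStepStar (4*s+3) (4*t+3+2) = C := by
    unfold twoStepStar
    rw [show (4*t+3+2) - 2 = 4*t+3 from by omega, show 4*t+3+2 = 4*t+5 from by omega, hC]
  rw [hAts, hBts, hCts]
  set p : ℕ := 4*s*t+s+t with hp
  have hp1 : 1 ≤ p := by
    have h1 : t ≤ s*t := Nat.le_mul_of_pos_left t hs1
    have h2 : 4*(s*t) = 4*s*t := by ring
    omega
  have hA1 : 1 ≤ A := by omega
  -- μ for relation R3
  obtain ⟨μ, hμ⟩ : ∃ μ, 4*s*t+5*s = μ + (3*t+2) := by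
    refine ⟨4*s*t+5*s - (3*t+2), ?_⟩
    have h1 : t ≤ s*t := Nat.le_mul_of_pos_left t hs1
    have h2 : 4*(s*t) = 4*s*t := by ring
    omega
  have hμ1 : 1 ≤ μ := by
    have h1 : t ≤ s*t := Nat.le_mul_of_pos_left t hs1
    have h2 : 4*(s*t) = 4*s*t := by ring
    omega
  -- Key polynomial relations
  have I1 : (16*t+12)*B = (8*t+7)*A + (8*t+5)*C := by rw [hA, hB, hC]; ring
  have I2 : (4*t+2)*B + p*C = (4*s*t+5*s+5*t+5)*A := by rw [hA, hB, hC, hp]; ring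
  have I3 : (p+8*t+5)*C = μ*A + (12*t+10)*B := by
    rw [hA, hB, hC, hp]
    have hμ' : μ = 4*s*t+5*s - (3*t+2) := by omega
    rw [hμ', Nat.sub_mul]
    have h2 : (3*t+2)*((4*s+3)*(4*t+3)*(4*t+1)+1) ≤ (4*s*t+5*s)*((4*s+3)*(4*t+3)*(4*t+1)+1) := by
      apply Nat.mul_le_mul_right; omega
    zify [h2]
    ring
  have I4 : ∀ r : ℕ, (r*((4*t+3)*(4*t+1)*(8*t+7)))*B
      + (((4*s+3)*(4*t+3)*(4*t+1))*(r*((4*t+3)*((4*t+3)*(4*t+1)))))*C + r*A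
      = r + (r*((4*t+3)*((4*t+1)*(4*t+4))) + (r*((4*t+3)*((4*t+3)*(4*t+1))))*C)*A := by
    intro r; rw [hA, hB, hC]; ring
  have I5 : (16*t+12)*p + (4*t+2)*(8*t+5) = A := by rw [hA, hp]; ring
  have I6 : (12*t+10)*B = (8*t+5)*C + ((4*s+3)*(64*t^3+112*t^2+56*t+5) + (4*t+5)) := by
    rw [hB, hC]; ring
  have hAB : A ≤ B := by
    rw [hA, hB]
    have : (4*t+3)*(4*t+1) ≤ (4*t+4)*(4*t+2) := by nlinarith
    have := Nat.mul_le_mul_left (4*s+3) this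
    nlinarith [this]
  clear_value A B C p
  -- Reduction lemma
  have reduce : ∀ v x y : ℕ, x*B + y*C ≤ v →
      ∃ x' y', ((x' < 16*t+12 ∧ y' < p) ∨ (x' < 4*t+2 ∧ p ≤ y' ∧ y' < p+8*t+5)) ∧
        x'*B + y'*C ≤ x*B + y*C ∧ x'*B + y'*C ≡ x*B + y*C [MOD A] := by
    intro v
    induction v using Nat.strong_induction_on with
    | _ v ih =>
      intro x y hxy
      by_cases hx : 16*t+12 ≤ x
      · -- apply R1
        have I1' : ((16*t+12)*B : ℤ) = (8*t+7)*A + (8*t+5)*C := by exact_mod_cast I1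
        have hsplit : x*B + y*C = (x - (16*t+12))*B + (y + (8*t+5))*C + (8*t+7)*A := by
          zify [hx]
          linear_combination I1'
        have hlt : (x - (16*t+12))*B + (y + (8*t+5))*C < v := by
          have h1 : 1 ≤ (8*t+7)*A := Nat.one_le_iff_ne_zero.mpr (by positivity)
          omega
        obtain ⟨x', y', hin, hle, hmod⟩ := ih _ hlt (x - (16*t+12)) (y + (8*t+5)) le_rfl
        refine ⟨x', y', hin, by omega, ?_⟩
        refine hmod.trans ?_
        show _ % A = _ % A
        rw [hsplit, Nat.add_mul_mod_self_right]
      · by_cases hy : y < p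
        · exact ⟨x, y, Or.inl ⟨by omega, hy⟩, le_rfl, Nat.ModEq.refl _⟩
        · by_cases hx2 : 4*t+2 ≤ x
          · -- apply R2
            have I2' : ((4*t+2)*B + p*C : ℤ) = (4*s*t+5*s+5*t+5)*A := by exact_mod_cast I2
            have hyp : p ≤ y := by omega
            have hsplit : x*B + y*C = (x - (4*t+2))*B + (y - p)*C + (4*s*t+5*s+5*t+5)*A := by
              zify [hx2, hyp]
              linear_combination I2'
            have hlt : (x - (4*t+2))*B + (y - p)*C < v := by
              have h1 : 1 ≤ (4*s*t+5*s+5*t+5)*A := Nat.one_le_iff_ne_zero.mpr (by positivity)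
              omega
            obtain ⟨x', y', hin, hle, hmod⟩ := ih _ hlt (x - (4*t+2)) (y - p) le_rfl
            refine ⟨x', y', hin, by omega, ?_⟩
            refine hmod.trans ?_
            show _ % A = _ % A
            rw [hsplit, Nat.add_mul_mod_self_right]
          · by_cases hy2 : y < p+8*t+5
            · exact ⟨x, y, Or.inr ⟨by omega, by omega, hy2⟩, le_rfl, Nat.ModEq.refl _⟩
            · -- apply R3
              have I3' : ((p+8*t+5)*C : ℤ) = μ*A + (12*t+10)*B := by exact_mod_cast I3
              have hyp : p+8*t+5 ≤ y := by omega
              have hsplit : x*B + y*C = (x + (12*t+10))*B + (y - (p+8*t+5))*C + μ*A := by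
                zify [hyp]
                linear_combination I3'
              have hlt : (x + (12*t+10))*B + (y - (p+8*t+5))*C < v := by
                have h1 : 1 ≤ μ*A := Nat.one_le_iff_ne_zero.mpr (by positivity)
                omega
              obtain ⟨x', y', hin, hle, hmod⟩ := ih _ hlt (x + (12*t+10)) (y - (p+8*t+5)) le_rfl
              refine ⟨x', y', hin, by omega, ?_⟩
              refine hmod.trans ?_
              show _ % A = _ % A
              rw [hsplit, Nat.add_mul_mod_self_right]
  -- modular surjectivity
  have surj : ∀ r : ℕ, ∃ x y, ((x < 16*t+12 ∧ y < p) ∨ (x < 4*t+2 ∧ p ≤ y ∧ y < p+8*t+5)) ∧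
      x*B + y*C ≡ r [MOD A] := by
    intro r
    obtain ⟨x, y, hin, _, hmod⟩ := reduce _ (r*((4*t+3)*(4*t+1)*(8*t+7)))
      (((4*s+3)*(4*t+3)*(4*t+1))*(r*((4*t+3)*((4*t+3)*(4*t+1))))) le_rfl
    refine ⟨x, y, hin, hmod.trans ?_⟩
    show _ % A = _ % A
    have h := congrArg (· % A) (I4 r)
    simpa [Nat.add_mul_mod_self_right] using h
  -- the maximal corner
  obtain ⟨q', hq'⟩ : ∃ q', q' + 1 = p := ⟨p - 1, by omega⟩
  obtain ⟨g, hg⟩ : ∃ g, g + A = (16*t+11)*B + q'*C := by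
    refine ⟨(16*t+11)*B + q'*C - A, ?_⟩
    have h1 : B ≤ (16*t+11)*B := Nat.le_mul_of_pos_left B (by omega)
    omega
  have hmaxL : ∀ x y : ℕ, ((x < 16*t+12 ∧ y < p) ∨ (x < 4*t+2 ∧ p ≤ y ∧ y < p+8*t+5)) →
      x*B + y*C ≤ (16*t+11)*B + q'*C := by
    rintro x y (⟨h1, h2⟩ | ⟨h1, h2, h3⟩)
    · gcongr <;> omega
    · calc x*B + y*C ≤ (4*t+1)*B + (q'+(8*t+5))*C := by gcongr <;> omega
        _ ≤ (16*t+11)*B + q'*C := by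
          have e1 : (q'+(8*t+5))*C = q'*C + (8*t+5)*C := by ring
          have e2 : (16*t+11)*B = (4*t+1)*B + (12*t+10)*B := by ring
          omega
  -- ZMod machinery
  haveI : NeZero A := ⟨by omega⟩
  classical
  set f : ℕ × ℕ → ZMod A := fun z => ((z.1 * B + z.2 * C : ℕ) : ZMod A) with hf
  set L : Finset (ℕ × ℕ) :=
    Finset.range (16*t+12) ×ˢ Finset.range p ∪ Finset.range (4*t+2) ×ˢ Finset.Ico p (p+8*t+5)
    with hL
  have hmemL : ∀ x y : ℕ, (x, y) ∈ L ↔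
      ((x < 16*t+12 ∧ y < p) ∨ (x < 4*t+2 ∧ p ≤ y ∧ y < p+8*t+5)) := by
    intro x y
    simp [hL, Finset.mem_union, Finset.mem_product, Finset.mem_range, Finset.mem_Ico]
  have hcardL : L.card = A := by
    rw [hL, Finset.card_union_of_disjoint, Finset.card_product, Finset.card_product,
      Finset.card_range, Finset.card_range, Finset.card_range, Nat.card_Ico]
    · rw [show p+8*t+5-p = 8*t+5 from by omega]; exact I5
    · simp only [Finset.disjoint_left, Finset.mem_product, Finset.mem_range, Finset.mem_Ico]
      rintro ⟨x, y⟩ ⟨-, h1⟩ ⟨-, h2, -⟩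
      omega
  have fsurj : ∀ r : ZMod A, ∃ z ∈ L, f z = r := by
    intro r
    obtain ⟨x, y, hin, hmod⟩ := surj (ZMod.val r)
    refine ⟨(x, y), (hmemL x y).mpr hin, ?_⟩
    have h1 : ((x*B + y*C : ℕ) : ZMod A) = ((ZMod.val r : ℕ) : ZMod A) :=
      (ZMod.natCast_eq_natCast_iff _ _ _).mpr hmod
    rw [ZMod.natCast_rightInverse r] at h1
    simpa [hf] using h1
  have himg : L.image f = Finset.univ := by
    refine Finset.eq_univ_iff_forall.mpr fun r => Finset.mem_image.mpr ?_
    obtain ⟨z, hz, hfz⟩ := fsurj r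
    exact ⟨z, hz, hfz⟩
  have hinj : Set.InjOn f ↑L := by
    apply Finset.injOn_of_card_image_eq
    rw [himg, Finset.card_univ, ZMod.card, hcardL]
  -- closure membership characterization
  have hmemclos : ∀ k : ℕ, k ∈ AddSubmonoid.closure ({A, B, C} : Set ℕ) ↔
      ∃ α β γ : ℕ, k = α*A + β*B + γ*C := by
    intro k
    constructor
    · intro hk
      induction hk using AddSubmonoid.closure_induction with
      | mem x hx =>
        rcases hx with rfl | rfl | rfl
        · exact ⟨1, 0, 0, by ring⟩
        · exact ⟨0, 1, 0, by ring⟩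
        · exact ⟨0, 0, 1, by ring⟩
      | zero => exact ⟨0, 0, 0, by simp⟩
      | add x y hx hy ihx ihy =>
        obtain ⟨α1, β1, γ1, h1⟩ := ihx
        obtain ⟨α2, β2, γ2, h2⟩ := ihy
        exact ⟨α1+α2, β1+β2, γ1+γ2, by rw [h1, h2]; ring⟩
    · rintro ⟨α, β, γ, rfl⟩
      have hmul : ∀ (m u : ℕ), u ∈ AddSubmonoid.closure ({A, B, C} : Set ℕ) →
          m*u ∈ AddSubmonoid.closure ({A, B, C} : Set ℕ) := by
        intro m u hu
        simpa [nsmul_eq_mul] using AddSubmonoid.nsmul_mem _ hu m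
      have hAc : A ∈ AddSubmonoid.closure ({A, B, C} : Set ℕ) :=
        AddSubmonoid.subset_closure (by simp)
      have hBc : B ∈ AddSubmonoid.closure ({A, B, C} : Set ℕ) :=
        AddSubmonoid.subset_closure (by simp)
      have hCc : C ∈ AddSubmonoid.closure ({A, B, C} : Set ℕ) :=
        AddSubmonoid.subset_closure (by simp)
      exact add_mem (add_mem (hmul α A hAc) (hmul β B hBc)) (hmul γ C hCc)
  -- THE RESULT
  refine ⟨g, ⟨?_, ?_⟩, ?_⟩
  · -- g is not representable
    simp only [Set.mem_setOf_eq]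
    intro hgmem
    obtain ⟨α, β, γ, hrep⟩ := (hmemclos g).mp hgmem
    obtain ⟨x', y', hin, hle, hmod⟩ := reduce (β*B + γ*C) β γ le_rfl
    -- β*B + γ*C ≡ g [MOD A]
    have hmod2 : β*B + γ*C ≡ g [MOD A] := by
      show _ % A = _ % A
      rw [hrep, show α*A + β*B + γ*C = β*B + γ*C + α*A from by ring, Nat.add_mul_mod_self_right]
    have hmod3 : (16*t+11)*B + q'*C ≡ g [MOD A] := by
      show _ % A = _ % A
      rw [← hg, Nat.add_mod_right]
    have hfin : f (x', y') = f (16*t+11, q') := by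
      simp only [hf]
      exact (ZMod.natCast_eq_natCast_iff _ _ _).mpr ((hmod.trans hmod2).trans hmod3.symm)
    have hmem1 : ((x' : ℕ), (y' : ℕ)) ∈ (L : Set (ℕ × ℕ)) := by
      exact_mod_cast (hmemL x' y').mpr hin
    have hmem2 : ((16*t+11 : ℕ), (q' : ℕ)) ∈ (L : Set (ℕ × ℕ)) := by
      exact_mod_cast (hmemL _ _).mpr (Or.inl ⟨by omega, by omega⟩)
    have heq := hinj hmem1 hmem2 hfin
    have hx' : x' = 16*t+11 := congrArg Prod.fst heq
    have hy' : y' = q' := congrArg Prod.snd heq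
    rw [hx', hy'] at hle
    -- now g + A = (16t+11)B + q'C ≤ βB + γC ≤ g
    have : α*A + (β*B) + (γ*C) = g := hrep.symm
    omega
  · -- everything above g is representable
    rintro k hk
    simp only [Set.mem_setOf_eq] at hk
    by_contra hlt
    push_neg at hlt
    obtain ⟨x, y, hin, hmod⟩ := surj k
    have hle := hmaxL x y hin
    have hxyk : x*B + y*C ≤ k := by
      by_contra hgt
      push_neg at hgt
      have hdvd : A ∣ (x*B + y*C) - k := (Nat.modEq_iff_dvd' (le_of_lt hgt)).mp hmod.symm
      obtain ⟨c, hc⟩ := hdvd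
      rcases c with _ | c
      · omega
      · have h1 : A ≤ A*(c+1) := Nat.le_mul_of_pos_right A (Nat.succ_pos c)
        omega
    have hdvd : A ∣ k - (x*B + y*C) := (Nat.modEq_iff_dvd' hxyk).mp hmod
    obtain ⟨c, hc⟩ := hdvd
    exact hk ((hmemclos k).mpr ⟨c, x, y, by
      have : A*c = c*A := Nat.mul_comm A c
      omega⟩)
  · -- the numerical formula
    have hgq : (g : ℚ) + (A : ℚ) = (16*(t:ℚ)+11)*(B:ℚ) + (q':ℚ)*(C:ℚ) := by
      exact_mod_cast hg
    have hq'q : (q' : ℚ) + 1 = 4*(s:ℚ)*(t:ℚ) + (s:ℚ) + (t:ℚ) := by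
      exact_mod_cast hq'.trans hp
    push_cast
    linear_combination hgq + (C : ℚ)*hq'q
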